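/- Restriction of a determinantal measure is determinantal: let n : ℕ, let p be a determinantal probability measure on the subsets of Fin n with kernel K : Matrix (Fin n) (Fin n) ℂ, and let E : Finset (Fin n). Define the restricted probability mass function q on Finset (Fin n) by q S = ∑ over T : Finset (Fin n) with T ∩ E = S of p T. Then q is a determinantal probability measure with kernel K_E, where K_E i j = K i j if i ∈ E and j ∈ E, and K_E i j = 0 otherwise. -/
import Mathlib


open scoped ComplexConjugate

/-- Determinant of the principal submatrix of `K` on the finset `S`. -/
noncomputable def detMinor {n : ℕ} (K : Matrix (Fin n) (Fin n) ℂ) (S : Finset (Fin n)) : ℂ :=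
  (Matrix.of fun a b : Fin S.card =>
    K (S.orderEmbOfFin rfl a) (S.orderEmbOfFin rfl b)).det

/-- `p` is a determinantal probability measure on subsets of `Fin n` with kernel `K`. -/
def IsDeterminantal {n : ℕ} (K : Matrix (Fin n) (Fin n) ℂ)
    (p : PMF (Finset (Fin n))) : Prop :=
  ∀ S : Finset (Fin n),
    ∑ T ∈ Finset.univ.filter (fun T => S ⊆ T), ((p T).toReal : ℂ) = detMinor K S
theorem restriction_determinantal {n : ℕ} (K : Matrix (Fin n) (Fin n) ℂ)
    (p : PMF (Finset (Fin n))) (hp : IsDeterminantal K p) (E : Finset (Fin n)) :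
    IsDeterminantal
      (Matrix.of fun i j => if i ∈ E ∧ j ∈ E then K i j else 0)
      (p.map fun T => T ∩ E) := by
  classical
  intro S
  have hmap : ∀ T : Finset (Fin n), (((p.map fun U => U ∩ E) T).toReal : ℂ)
      = ∑ U : Finset (Fin n), if T = U ∩ E then ((p U).toReal : ℂ) else 0 := by
    intro T
    rw [PMF.map_apply, tsum_fintype, ENNReal.toReal_sum (by
      intro U _; split
      · exact PMF.apply_ne_top p U
      · simp)]
    push_cast
    congr 1; ext U; split <;> simp
  calc ∑ T ∈ Finset.univ.filter (fun T => S ⊆ T), (((p.map fun U => U ∩ E) T).toReal : ℂ)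
      = ∑ T ∈ Finset.univ.filter (fun T => S ⊆ T), ∑ U : Finset (Fin n),
          if T = U ∩ E then ((p U).toReal : ℂ) else 0 := by
        exact Finset.sum_congr rfl fun T _ => hmap T
    _ = ∑ U : Finset (Fin n), ∑ T ∈ Finset.univ.filter (fun T => S ⊆ T),
          if T = U ∩ E then ((p U).toReal : ℂ) else 0 := Finset.sum_comm
    _ = ∑ U : Finset (Fin n), if S ⊆ U ∩ E then ((p U).toReal : ℂ) else 0 := by
        refine Finset.sum_congr rfl fun U _ => ?_
        by_cases h : S ⊆ U ∩ E
        · rw [if_pos h]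
          rw [Finset.sum_eq_single_of_mem (U ∩ E)
            (Finset.mem_filter.mpr ⟨Finset.mem_univ _, h⟩)
            (fun T _ hT => if_neg hT), if_pos rfl]
        · rw [if_neg h, Finset.sum_eq_zero]
          intro T hT
          simp only [Finset.mem_filter] at hT
          rw [if_neg]
          rintro rfl
          exact h hT.2
    _ = detMinor (Matrix.of fun i j => if i ∈ E ∧ j ∈ E then K i j else 0) S := by
        by_cases hSE : S ⊆ E
        · have h1 : ∀ U : Finset (Fin n), (S ⊆ U ∩ E) ↔ S ⊆ U := by
            intro U
            constructor
            · intro h; exact h.trans Finset.inter_subset_left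
            · intro h; exact Finset.subset_inter h hSE
          have : (∑ U : Finset (Fin n), if S ⊆ U ∩ E then ((p U).toReal : ℂ) else 0)
              = ∑ U ∈ Finset.univ.filter (fun U => S ⊆ U), ((p U).toReal : ℂ) := by
            rw [Finset.sum_filter]
            exact Finset.sum_congr rfl fun U _ => by simp only [h1 U]
          rw [this, hp S]
          unfold detMinor
          congr 1
          ext a b
          simp only [Matrix.of_apply]
          rw [if_pos ⟨hSE (S.orderEmbOfFin_mem rfl a), hSE (S.orderEmbOfFin_mem rfl b)⟩]
        · obtain ⟨i, hiS, hiE⟩ := Finset.not_subset.mp hSE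
          have h0 : (∑ U : Finset (Fin n), if S ⊆ U ∩ E then ((p U).toReal : ℂ) else 0) = 0 := by
            refine Finset.sum_eq_zero fun U _ => ?_
            rw [if_neg]
            intro h
            exact hiE (Finset.mem_inter.mp (h hiS)).2
          rw [h0]
          obtain ⟨a, ha⟩ : ∃ a : Fin S.card, S.orderEmbOfFin rfl a = i := by
            have := S.range_orderEmbOfFin rfl
            have : i ∈ Set.range (S.orderEmbOfFin rfl) := by rw [this]; exact hiS
            exact this
          symm
          apply Matrix.det_eq_zero_of_row_eq_zero a
          intro b
          simp only [Matrix.of_apply, ha]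
          rw [if_neg (by tauto)]
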